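/- For every real ε with 0 < ε < 1 there exist positive integers s and h with s ≤ h such that for every real R with 0 < R < 1, (s/(s+1))·(1 − h·R/(h−s+1)) > 1 − R − ε. In other words, the normalized decoding radius (s/(s+1))·(1 − h·R/(h−s+1)) of the folded Gabidulin list-decoder can be made to exceed 1 − R − ε for all rates R simultaneously by a suitable choice of the folding parameter h and the interpolation parameter s. -/

import Mathlib

/-- For every `0 < ε < 1` there are positive integers `s ≤ h` such that for every rate
`0 < R < 1` the normalized decoding radius `(s/(s+1))·(1 - hR/(h-s+1))` of the folded
Gabidulin list-decoder exceeds `1 - R - ε`. -/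
theorem stmt13 :
    ∀ ε : ℝ, 0 < ε → ε < 1 →
      ∃ s h : ℕ, 0 < s ∧ s ≤ h ∧
        ∀ R : ℝ, 0 < R → R < 1 →
          ((s : ℝ) / ((s : ℝ) + 1)) * (1 - (h : ℝ) * R / ((h : ℝ) - (s : ℝ) + 1))
            > 1 - R - ε := by
  intro ε hε hε1
  set n : ℕ := ⌈1/ε⌉₊ with hn
  have hεinv : (0:ℝ) < 1/ε := by positivity
  have hna : (1:ℝ)/ε ≤ (n : ℝ) := Nat.le_ceil _
  have hn1 : 1 ≤ n := by
    by_contra h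
    push_neg at h
    interval_cases n
    · simp only [Nat.cast_zero] at hna; linarith
  have ha1 : (1:ℝ) ≤ (n : ℝ) := by exact_mod_cast hn1
  refine ⟨n, n^3, hn1, Nat.le_self_pow (by norm_num) n, ?_⟩
  intro R hR hR1
  set a : ℝ := (n : ℝ) with hadef
  have hcast : ((n^3 : ℕ) : ℝ) = a^3 := by push_cast; ring
  rw [hcast]
  have hd : (1:ℝ) ≤ a^3 - a + 1 := by nlinarith [sq_nonneg a, sq_nonneg (a - 1), mul_pos (mul_pos (lt_of_lt_of_le one_pos ha1) (lt_of_lt_of_le one_pos ha1)) (lt_of_lt_of_le one_pos ha1)]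
  have hdpos : (0:ℝ) < a^3 - a + 1 := by linarith
  have hapos : (0:ℝ) < a + 1 := by linarith
  have hεa : 1 < ε * (a + 1) := by
    have h1a : 1 ≤ a * ε := by rwa [div_le_iff₀ hε] at hna
    nlinarith
  have key : a / (a + 1) * (1 - a^3 * R / (a^3 - a + 1)) - (1 - R - ε)
      = (R * (a^3 - a^2 + 1) + (ε * (a + 1) - 1) * (a^3 - a + 1))
        / ((a + 1) * (a^3 - a + 1)) := by
    rw [one_sub_div hdpos.ne', div_mul_div_comm, div_sub' (mul_pos hapos hdpos).ne']
    congr 1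
    ring
  have hnum : 0 < R * (a^3 - a^2 + 1) + (ε * (a + 1) - 1) * (a^3 - a + 1) := by
    have h1 : 0 < a^3 - a^2 + 1 := by nlinarith
    have h2 : 0 < (ε * (a + 1) - 1) * (a^3 - a + 1) := by nlinarith
    nlinarith
  have : 0 < a / (a + 1) * (1 - a^3 * R / (a^3 - a + 1)) - (1 - R - ε) := by
    rw [key]; positivity
  linarith
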